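/- In the braid group B₃ = ⟨a, b ∣ aba = bab⟩, the center of B₃ equals the cyclic subgroup generated by the element (aba)². -/

import Mathlib

/-- The braid relation `aba = bab` (as the relator `aba(bab)⁻¹`) on two generators. -/
def braidRels : Set (FreeGroup (Fin 2)) :=
  {FreeGroup.of 0 * FreeGroup.of 1 * FreeGroup.of 0 *
    (FreeGroup.of 1 * FreeGroup.of 0 * FreeGroup.of 1)⁻¹}

/-- The braid group `B₃ = ⟨a, b ∣ aba = bab⟩`. -/
abbrev B₃ : Type := PresentedGroup braidRels

/-- The generator `a` of `B₃`. -/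
def a : B₃ := PresentedGroup.of 0

/-- The generator `b` of `B₃`. -/
def b : B₃ := PresentedGroup.of 1

open Monoid

/-! ### Basic consequences of the braid relation -/

lemma braid : a * b * a = b * a * b := by
  have h : (PresentedGroup.mk braidRels)
      (FreeGroup.of 0 * FreeGroup.of 1 * FreeGroup.of 0 *
        (FreeGroup.of 1 * FreeGroup.of 0 * FreeGroup.of 1)⁻¹) = 1 :=
    (QuotientGroup.eq_one_iff _).mpr
      (Subgroup.subset_normalClosure (Set.mem_singleton _))
  simp only [map_mul, map_inv] at h
  have h2 : a * b * a * (b * a * b)⁻¹ = 1 := h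
  exact mul_inv_eq_one.mp h2

lemma sq1 : (a * b * a) ^ 2 = (a * b) ^ 3 := by
  rw [sq]; nth_rewrite 2 [braid]; simp [pow_succ, mul_assoc]

lemma sq2 : (a * b * a) ^ 2 = (b * a) ^ 3 := by
  rw [sq]; nth_rewrite 1 [braid]; simp [pow_succ, mul_assoc]

lemma commA : (a * b * a) ^ 2 * a = a * (a * b * a) ^ 2 := by
  conv_lhs => rw [sq1]
  conv_rhs => rw [sq2]
  simp [pow_succ, mul_assoc]

lemma commB : (a * b * a) ^ 2 * b = b * (a * b * a) ^ 2 := by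
  conv_lhs => rw [sq2]
  conv_rhs => rw [sq1]
  simp [pow_succ, mul_assoc]

lemma delta_sq_central : (a * b * a) ^ 2 ∈ Subgroup.center B₃ := by
  rw [Subgroup.mem_center_iff]
  intro g
  have : g ∈ Subgroup.centralizer {(a * b * a) ^ 2} := by
    apply PresentedGroup.generated_by
    intro j
    rw [Subgroup.mem_centralizer_iff]
    intro h hh
    rcases hh with rfl
    fin_cases j
    · exact commA
    · exact commB
  exact ((Subgroup.mem_centralizer_iff.mp this) _ rfl).symm

/-- The subgroup generated by `(aba)²`. -/
def N : Subgroup B₃ := Subgroup.zpowers ((a * b * a) ^ 2)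

lemma N_le_center : N ≤ Subgroup.center B₃ :=
  Subgroup.zpowers_le.mpr delta_sq_central

instance : N.Normal := by
  constructor
  intro n hn g
  have h := Subgroup.mem_center_iff.mp (N_le_center hn) g
  have h2 : g * n * g⁻¹ = n := by rw [h, mul_assoc, mul_inv_cancel, mul_one]
  rw [h2]
  exact hn

/-! ### The free product `C₂ * C₃` -/

abbrev Fac : Fin 2 → Type := fun i => Multiplicative (ZMod (i.val + 2))
abbrev C23 : Type := Monoid.CoprodI Fac

def X : C23 := CoprodI.of (M := Fac) (i := 0) (Multiplicative.ofAdd (1 : ZMod 2))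
def Y : C23 := CoprodI.of (M := Fac) (i := 1) (Multiplicative.ofAdd (1 : ZMod 3))

lemma X_sq : X * X = 1 := by
  rw [X, ← map_mul]
  rw [show (Multiplicative.ofAdd (1 : ZMod ((0 : Fin 2).val + 2))) *
      (Multiplicative.ofAdd (1 : ZMod ((0 : Fin 2).val + 2))) = 1 from by decide, map_one]

lemma Y_cube : Y * Y * Y = 1 := by
  rw [Y, ← map_mul, ← map_mul]
  rw [show (Multiplicative.ofAdd (1 : ZMod ((1 : Fin 2).val + 2))) *
      (Multiplicative.ofAdd (1 : ZMod ((1 : Fin 2).val + 2))) *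
      (Multiplicative.ofAdd (1 : ZMod ((1 : Fin 2).val + 2))) = 1 from by decide, map_one]

lemma factor_mem {n : ℕ} [NeZero n] (m : Multiplicative (ZMod n)) :
    m = (Multiplicative.ofAdd (1 : ZMod n)) ^ (Multiplicative.toAdd m).val := by
  rw [← ofAdd_nsmul]
  simp [nsmul_eq_mul, ZMod.natCast_val, ZMod.cast_id]

/-! ### Triviality of the center of `C₂ * C₃` -/

lemma replaceHead_length {ι : Type*} {M : ι → Type*} [∀ i, Monoid (M i)]
    {i j : ι} (x : M i) (h : x ≠ 1) (w : CoprodI.NeWord M i j) :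
    (CoprodI.NeWord.replaceHead x h w).toList.length = w.toList.length := by
  induction w with
  | singleton => rfl
  | append w₁ hne w₂ ih₁ ih₂ =>
    simp [CoprodI.NeWord.replaceHead, ih₁]

lemma prod_inj : Function.Injective (CoprodI.Word.prod : CoprodI.Word Fac → C23) := by
  intro u v huv
  have hu : CoprodI.Word.equiv (CoprodI.Word.prod u) = u :=
    (CoprodI.Word.equiv).apply_eq_iff_eq_symm_apply.mpr rfl
  have hv : CoprodI.Word.equiv (CoprodI.Word.prod v) = v :=
    (CoprodI.Word.equiv).apply_eq_iff_eq_symm_apply.mpr rfl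
  rw [← hu, ← hv, huv]

lemma exists_c : ∀ h : Multiplicative (ZMod 3),
    ∃ c : Multiplicative (ZMod 3), c ≠ 1 ∧ c * h ≠ 1 := by decide

lemma conj_eq_self (z : C23) (hz : ∀ g : C23, g * z = z * g) (c : C23) :
    c * z * c⁻¹ = z := by
  rw [hz c, mul_assoc, mul_inv_cancel, mul_one]

lemma aux1 {i j k : Fin 2} (z : C23) (hz : ∀ g : C23, g * z = z * g)
    (nw : CoprodI.NeWord Fac i j) (hprod : nw.prod = z)
    (c : Fac k) (hc : c ≠ 1) (hki : k ≠ i) (hjk : j ≠ k) : False := by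
  have hcinv : c⁻¹ ≠ 1 := inv_ne_one.mpr hc
  set u := CoprodI.NeWord.append
      (CoprodI.NeWord.append (CoprodI.NeWord.singleton c hc) hki nw) hjk
      (CoprodI.NeWord.singleton c⁻¹ hcinv) with hu
  have hup : u.prod = z := by
    rw [hu]
    simp only [CoprodI.NeWord.append_prod, CoprodI.NeWord.prod_singleton, hprod, map_inv]
    exact conj_eq_self z hz _
  have heq : u.toWord = nw.toWord := prod_inj (hup.trans hprod.symm)
  have hlen := congrArg (fun t => t.toList.length) heq
  simp only [CoprodI.NeWord.toWord] at hlen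
  simp only [hu, CoprodI.NeWord.toList, List.length_append, List.length_cons,
    List.length_nil, List.length_singleton] at hlen
  omega

lemma aux2 {j : Fin 2} (z : C23) (hz : ∀ g : C23, g * z = z * g)
    (nw : CoprodI.NeWord Fac 1 j) (hj : j ≠ 1) (hprod : nw.prod = z) : False := by
  obtain ⟨c, hc, hch⟩ := exists_c nw.head
  have hcinv : c⁻¹ ≠ 1 := inv_ne_one.mpr hc
  set u := CoprodI.NeWord.append (CoprodI.NeWord.mulHead nw c hch) hj
      (CoprodI.NeWord.singleton c⁻¹ hcinv) with hu
  have hup : u.prod = z := by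
    rw [hu]
    simp only [CoprodI.NeWord.append_prod, CoprodI.NeWord.mulHead_prod,
      CoprodI.NeWord.prod_singleton, hprod, map_inv]
    rw [mul_assoc] at *
    exact (mul_assoc _ _ _).symm.trans (conj_eq_self z hz _)
  have heq : u.toWord = nw.toWord := prod_inj (hup.trans hprod.symm)
  have hlen := congrArg (fun t => t.toList.length) heq
  simp only [CoprodI.NeWord.toWord] at hlen
  simp only [hu, CoprodI.NeWord.toList, List.length_append, List.length_cons,
    List.length_nil, List.length_singleton, CoprodI.NeWord.mulHead,
    replaceHead_length] at hlen
  omega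

lemma center_triv (z : C23) (hz : ∀ g : C23, g * z = z * g) : z = 1 := by
  by_contra hz1
  have hprod : CoprodI.Word.prod (CoprodI.Word.equiv z) = z :=
    (CoprodI.Word.equiv).symm_apply_apply z
  have hne : CoprodI.Word.equiv z ≠ CoprodI.Word.empty := by
    intro h
    exact hz1 (by rw [← hprod, h, CoprodI.Word.prod_empty])
  obtain ⟨i, j, nw, hnw⟩ := CoprodI.NeWord.of_word _ hne
  have hprodnw : nw.prod = z := by
    rw [CoprodI.NeWord.prod, hnw, hprod]
  have hzinv : ∀ g : C23, g * z⁻¹ = z⁻¹ * g := by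
    intro g
    have h := hz g⁻¹
    calc g * z⁻¹ = (z * g⁻¹)⁻¹ := by group
    _ = (g⁻¹ * z)⁻¹ := by rw [h]
    _ = z⁻¹ * g := by group
  by_cases hij : i = j
  · subst hij
    fin_cases i
    · exact aux1 (k := 1) z hz nw hprodnw (Multiplicative.ofAdd (1 : ZMod 3)) (by decide)
        (by decide) (by decide)
    · exact aux1 (k := 0) z hz nw hprodnw (Multiplicative.ofAdd (1 : ZMod 2)) (by decide)
        (by decide) (by decide)
  · fin_cases i <;> fin_cases j
    · exact absurd rfl hij
    · exact aux2 z⁻¹ hzinv nw.inv (by decide)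
        (by rw [CoprodI.NeWord.inv_prod, hprodnw])
    · exact aux2 z hz nw (by decide) hprodnw
    · exact absurd rfl hij

/-! ### The homomorphism `φ : B₃ → C₂ * C₃` -/

def gens : Fin 2 → C23 := ![Y⁻¹ * X, X⁻¹ * (Y * Y)]

lemma hrel : ∀ r ∈ braidRels, FreeGroup.lift gens r = 1 := by
  intro r hr
  rcases hr with rfl
  simp only [map_mul, map_inv, FreeGroup.lift_apply_of, gens, Matrix.cons_val_zero,
    Matrix.cons_val_one, Matrix.head_cons]
  have h1 : Y⁻¹ * X * (X⁻¹ * (Y * Y)) * (Y⁻¹ * X) = X := by group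
  have h2 : X⁻¹ * (Y * Y) * (Y⁻¹ * X) * (X⁻¹ * (Y * Y)) = X⁻¹ * (Y * Y * Y) := by group
  rw [h1, h2, Y_cube, mul_one]
  rw [inv_inv, X_sq]

def φ : B₃ →* C23 := PresentedGroup.toGroup hrel

lemma phi_a : φ a = Y⁻¹ * X := by
  rw [a, φ, PresentedGroup.toGroup.of]
  simp [gens]

lemma phi_b : φ b = X⁻¹ * (Y * Y) := by
  rw [b, φ, PresentedGroup.toGroup.of]
  simp [gens]

lemma X_mem : X ∈ φ.range := by
  refine ⟨a * b * a, ?_⟩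
  rw [map_mul, map_mul, phi_a, phi_b]
  group

lemma Y_mem : Y ∈ φ.range := by
  refine ⟨a * b, ?_⟩
  rw [map_mul, phi_a, phi_b]
  group

lemma phi_surj : Function.Surjective φ := by
  intro c
  suffices h : c ∈ φ.range from h
  induction c using CoprodI.induction_on with
  | one => exact one_mem _
  | of i m =>
    haveI : NeZero (i.val + 2) := ⟨by omega⟩
    rw [factor_mem m, map_pow]
    apply pow_mem
    fin_cases i
    · exact X_mem
    · exact Y_mem
  | mul x y hx hy => exact mul_mem hx hy

/-! ### The homomorphism `ψ : C₂ * C₃ → B₃ ⧸ N` -/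

def zmodHom {G : Type*} [Group G] (n : ℕ) [NeZero n] (g : G) (h : g ^ n = 1) :
    Multiplicative (ZMod n) →* G where
  toFun m := g ^ (Multiplicative.toAdd m).val
  map_one' := by simp
  map_mul' x y := by
    have hmod : ∀ m : ℕ, g ^ (m % n) = g ^ m := by
      intro m
      conv_rhs => rw [← Nat.div_add_mod m n]
      rw [pow_add, pow_mul, h, one_pow, one_mul]
    show g ^ (Multiplicative.toAdd x + Multiplicative.toAdd y).val = _
    rw [ZMod.val_add, hmod, pow_add]

lemma delta_q_sq : ((QuotientGroup.mk ((a * b * a)) : B₃ ⧸ N)) ^ 2 = 1 := by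
  rw [← QuotientGroup.mk_pow, QuotientGroup.eq_one_iff]
  exact Subgroup.mem_zpowers _

lemma ab_q_cube : ((QuotientGroup.mk ((a * b)) : B₃ ⧸ N)) ^ 3 = 1 := by
  rw [← QuotientGroup.mk_pow, QuotientGroup.eq_one_iff]
  rw [← sq1]
  exact Subgroup.mem_zpowers _

def kfun : ∀ i : Fin 2, Fac i →* B₃ ⧸ N := fun i =>
  match i with
  | ⟨0, _⟩ => zmodHom 2 (QuotientGroup.mk (a * b * a)) delta_q_sq
  | ⟨1, _⟩ => zmodHom 3 (QuotientGroup.mk (a * b)) ab_q_cube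

def ψ : C23 →* B₃ ⧸ N := CoprodI.lift kfun

lemma psi_X : ψ X = QuotientGroup.mk (a * b * a) := by
  rw [X, ψ, CoprodI.lift_of]
  show (QuotientGroup.mk (a * b * a) : B₃ ⧸ N) ^
      (Multiplicative.toAdd (Multiplicative.ofAdd (1 : ZMod ((0 : Fin 2).val + 2)))).val = _
  rw [show (Multiplicative.toAdd (Multiplicative.ofAdd (1 : ZMod ((0 : Fin 2).val + 2)))).val = 1
    from by decide, pow_one]

lemma psi_Y : ψ Y = QuotientGroup.mk (a * b) := by
  rw [Y, ψ, CoprodI.lift_of]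
  show (QuotientGroup.mk (a * b) : B₃ ⧸ N) ^
      (Multiplicative.toAdd (Multiplicative.ofAdd (1 : ZMod ((1 : Fin 2).val + 2)))).val = _
  rw [show (Multiplicative.toAdd (Multiplicative.ofAdd (1 : ZMod ((1 : Fin 2).val + 2)))).val = 1
    from by decide, pow_one]

lemma psi_phi : ψ.comp φ = QuotientGroup.mk' N := by
  ext x
  fin_cases x
  · show ψ (φ a) = QuotientGroup.mk a
    rw [phi_a, map_mul, map_inv, psi_X, psi_Y]
    rw [show (QuotientGroup.mk (a * b) : B₃ ⧸ N)⁻¹ * QuotientGroup.mk (a * b * a)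
        = QuotientGroup.mk ((a * b)⁻¹ * (a * b * a)) by simp [QuotientGroup.mk_mul, QuotientGroup.mk_inv]]
    congr 1
    group
  · show ψ (φ b) = QuotientGroup.mk b
    rw [phi_b, map_mul, map_mul, map_inv, psi_X, psi_Y]
    rw [show (QuotientGroup.mk (a * b * a) : B₃ ⧸ N)⁻¹ * (QuotientGroup.mk (a * b) * QuotientGroup.mk (a * b))
        = QuotientGroup.mk ((a * b * a)⁻¹ * (a * b * (a * b))) by simp [QuotientGroup.mk_mul, QuotientGroup.mk_inv]]
    congr 1
    group

/-! ### Main theorem -/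

/-- The center of `B₃ = ⟨a, b ∣ aba = bab⟩` is the cyclic subgroup generated by `(aba)²`. -/
theorem stmt_10 : Subgroup.center B₃ = Subgroup.zpowers ((a * b * a) ^ 2) := by
  apply le_antisymm
  · intro z hz
    have hzc := Subgroup.mem_center_iff.mp hz
    have hcent : ∀ g : C23, g * φ z = φ z * g := by
      intro g
      obtain ⟨w, rfl⟩ := phi_surj g
      rw [← map_mul, ← map_mul, hzc w]
    have h1 : φ z = 1 := center_triv (φ z) hcent
    have h2 : (QuotientGroup.mk' N) z = 1 := by
      rw [← psi_phi]
      show ψ (φ z) = 1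
      rw [h1, map_one]
    have h3 : z ∈ N := (QuotientGroup.eq_one_iff z).mp h2
    exact h3
  · exact N_le_center
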